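/- n divides Σ_{d ∣ n} μ(n/d) · #Fix(f^d) for any function f on a finite set X and any n ≥ 1, since the points of minimal period n are partitioned into orbits (periodic cycles) of size exactly n. -/

import Mathlib

open ArithmeticFunction Finset Function
open scoped ArithmeticFunction.Moebius

private lemma fix_card_eq (X : Type*) [Fintype X] [DecidableEq X] (f : X → X) (d : ℕ)
    (hd : 0 < d) :
    (univ.filter fun x => f^[d] x = x).card =
      ∑ e ∈ d.divisors, ((univ.filter fun x : X => minimalPeriod f x = e)).card := by
  rw [Finset.card_eq_sum_card_fiberwise (f := fun x => minimalPeriod f x)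
    (s := univ.filter fun x => f^[d] x = x) (t := d.divisors) (fun x hx => by
      simp only [Finset.mem_coe, mem_filter, mem_univ, true_and] at hx
      exact Nat.mem_divisors.2 ⟨IsPeriodicPt.minimalPeriod_dvd hx, hd.ne'⟩)]
  refine Finset.sum_congr rfl fun e he => ?_
  congr 1
  ext x
  simp only [mem_filter, mem_univ, true_and, Finset.filter_filter]
  constructor
  · exact fun h => h.2
  · intro h
    refine ⟨?_, h⟩
    exact isPeriodicPt_iff_minimalPeriod_dvd.2 (h ▸ (Nat.mem_divisors.1 he).1)

private lemma minper_card_dvd (X : Type*) [Fintype X] [DecidableEq X] (f : X → X) (n : ℕ)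
    (hn : 1 ≤ n) :
    n ∣ (univ.filter fun x : X => minimalPeriod f x = n).card := by
  classical
  set S : Finset X := univ.filter fun x : X => minimalPeriod f x = n with hS
  set φ : X → Finset X := fun x => (Finset.range n).image (fun k => f^[k] x) with hφ
  have hcardφ : ∀ x ∈ S, (φ x).card = n := by
    intro x hx
    simp only [hS, mem_filter, mem_univ, true_and] at hx
    rw [hφ]
    rw [Finset.card_image_of_injOn, Finset.card_range]
    intro a ha b hb hab
    simp only [Finset.coe_range, Set.mem_Iio] at ha hb
    exact iterate_injOn_Iio_minimalPeriod (by simpa [hx] using ha) (by simpa [hx] using hb) hab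
  have hper : ∀ x ∈ S, x ∈ periodicPts f := by
    intro x hx
    simp only [hS, mem_filter, mem_univ, true_and] at hx
    exact minimalPeriod_pos_iff_mem_periodicPts.1 (hx ▸ hn)
  have key : S.card = ∑ O ∈ S.image φ, (S.filter fun x => φ x = O).card :=
    Finset.card_eq_sum_card_fiberwise (fun x hx => Finset.mem_image_of_mem φ hx)
  have hfib : ∀ O ∈ S.image φ, (S.filter fun x => φ x = O).card = n := by
    intro O hO
    obtain ⟨x0, hx0, rfl⟩ := Finset.mem_image.1 hO
    have hx0' : minimalPeriod f x0 = n := by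
      simpa only [hS, mem_filter, mem_univ, true_and] using hx0
    have hsub : ∀ x, x ∈ S → φ x = φ x0 → x ∈ φ x0 := by
      intro x hx hxx
      rw [← hxx, hφ]
      exact Finset.mem_image.2 ⟨0, Finset.mem_range.2 hn, rfl⟩
    have hback : ∀ x ∈ φ x0, x ∈ S ∧ φ x = φ x0 := by
      intro x hx
      obtain ⟨k, hk, rfl⟩ := Finset.mem_image.1 hx
      have hxper : minimalPeriod f (f^[k] x0) = n := by
        rw [minimalPeriod_apply_iterate (hper x0 hx0) k, hx0']
      have hxS : f^[k] x0 ∈ S := by simp [hS, hxper]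
      refine ⟨hxS, ?_⟩
      -- φ (f^[k] x0) ⊆ φ x0 and both have card n
      have hsub2 : φ (f^[k] x0) ⊆ φ x0 := by
        intro y hy
        obtain ⟨j, hj, rfl⟩ := Finset.mem_image.1 hy
        rw [← Function.iterate_add_apply]
        have := iterate_mod_minimalPeriod_eq (f := f) (x := x0) (n := j + k)
        rw [hx0'] at this
        rw [← this]
        exact Finset.mem_image.2 ⟨(j + k) % n, Finset.mem_range.2
          (Nat.mod_lt _ hn), rfl⟩
      exact Finset.eq_of_subset_of_card_le hsub2
        (by rw [hcardφ _ hxS, hcardφ _ hx0])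
    have : S.filter (fun x => φ x = φ x0) = φ x0 := by
      ext x
      constructor
      · intro hx
        simp only [mem_filter] at hx
        exact hsub x hx.1 hx.2
      · intro hx
        obtain ⟨h1, h2⟩ := hback x hx
        exact mem_filter.2 ⟨h1, h2⟩
    rw [this, hcardφ _ hx0]
  rw [key, Finset.sum_congr rfl hfib, Finset.sum_const, smul_eq_mul]
  exact dvd_mul_left n _

theorem stmt19 (X : Type*) [Fintype X] [DecidableEq X] (f : X → X) (n : ℕ)
    (hn : 1 ≤ n) :
    (n : ℤ) ∣ ∑ d ∈ n.divisors, (μ (n / d) : ℤ) *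
      ((univ.filter fun x => f^[d] x = x).card : ℤ) := by
  classical
  set G : ℕ → ℤ := fun e => ((univ.filter fun x : X => minimalPeriod f x = e).card : ℤ) with hG
  set F : ℕ → ℤ := fun d => ((univ.filter fun x : X => f^[d] x = x).card : ℤ) with hF
  have hinv := (ArithmeticFunction.sum_eq_iff_sum_mul_moebius_eq (R := ℤ)
      (f := G) (g := F)).mp ?_ n hn
  · simp only [Int.cast_id] at hinv
    rw [← Nat.sum_divisorsAntidiagonal' (fun a b => (μ a : ℤ) * F b), hinv]
    simp only [hG]
    exact_mod_cast Int.natCast_dvd_natCast.2 (minper_card_dvd X f n hn)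
  · intro m hm
    have := fix_card_eq X f m hm
    simp only [hG, hF]
    exact_mod_cast this.symm
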